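/- The map sending a 2×2 density matrix D (with Bloch vector v) to P·D·P + (I−P)·D·(I−P), where P is the projection onto |θφ⟩, corresponds on Bloch vectors to the orthogonal projection v ↦ (v · u(1,θ,φ))·u(1,θ,φ) in ℝ³. -/
import Mathlib

open Complex Matrix

noncomputable def pauli : Fin 3 → Matrix (Fin 2) (Fin 2) ℂ :=
  ![!![0, 1; 1, 0], !![0, -Complex.I; Complex.I, 0], !![1, 0; 0, -1]]

noncomputable def blochMat (v : Fin 3 → ℝ) : Matrix (Fin 2) (Fin 2) ℂ :=
  (1/2 : ℂ) • ((1 : Matrix (Fin 2) (Fin 2) ℂ) + ∑ i, (v i : ℂ) • pauli i)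

noncomputable def uVec (θ φ : ℝ) : Fin 3 → ℝ :=
  ![Real.sin θ * Real.cos φ, Real.sin θ * Real.sin φ, Real.cos θ]

lemma key (u v : Fin 3 → ℝ) (hu : ((u 0:ℂ))^2 + (u 1:ℂ)^2 + (u 2:ℂ)^2 = 1) :
    blochMat u * blochMat v * blochMat u
      + (1 - blochMat u) * blochMat v * (1 - blochMat u)
      = blochMat ((∑ i, v i * u i) • u) := by
  have hI : (Complex.I)^2 = -1 := Complex.I_sq
  ext i j
  fin_cases i <;> fin_cases j <;>
    simp [blochMat, pauli, Matrix.mul_apply, Fin.sum_univ_succ, Matrix.one_apply]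
  · linear_combination ((1 - (v 2 : ℂ))/4) * hu
      + (-(u 2:ℂ)*(u 1)*(v 1)/2 + (u 1:ℂ)^2*((v 2:ℂ)-1)/4) * hI
  · linear_combination (-((v 0:ℂ) - Complex.I * (v 1:ℂ))/4) * hu
      + (-(u 0:ℂ)*(u 1)*(v 1)/2 + (u 1:ℂ)^2*((v 0:ℂ) + Complex.I*(v 1))/4) * hI
  · linear_combination (-((v 0:ℂ) + Complex.I * (v 1:ℂ))/4) * hu
      + (-(u 0:ℂ)*(u 1)*(v 1)/2 + (u 1:ℂ)^2*((v 0:ℂ) - Complex.I*(v 1))/4) * hI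
  · linear_combination ((1 + (v 2 : ℂ))/4) * hu
      + ((u 2:ℂ)*(u 1)*(v 1)/2 - (u 1:ℂ)^2*((v 2:ℂ)+1)/4) * hI

set_option linter.unusedVariables false in
theorem luders_is_bloch_projection (v : Fin 3 → ℝ) (hv : ∑ i, v i ^ 2 ≤ 1) (θ φ : ℝ) :
    blochMat (uVec θ φ) * blochMat v * blochMat (uVec θ φ)
      + (1 - blochMat (uVec θ φ)) * blochMat v * (1 - blochMat (uVec θ φ))
      = blochMat ((∑ i, v i * uVec θ φ i) • uVec θ φ) := by
  apply key
  have hs := Real.sin_sq_add_cos_sq θ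
  have hp := Real.sin_sq_add_cos_sq φ
  have : (Real.sin θ * Real.cos φ)^2 + (Real.sin θ * Real.sin φ)^2 + (Real.cos θ)^2 = 1 := by
    nlinarith [hs, hp]
  simp only [uVec, Matrix.cons_val_zero, Matrix.cons_val_one, Matrix.head_cons,
    Matrix.cons_val_two, Matrix.head_fin_const]
  exact_mod_cast this
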